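/- Let d be a positive divisor of N with gcd(d, N/d) = 1. Then the restriction of ψ_d² to P_d ∩ Γ₀(n,N) is a group homomorphism onto Γ₀(n−1, N/d)^± whose kernel is exactly U_d ∩ Γ₀(n,N); that is, the sequence 1 → U_d ∩ Γ₀(n,N) → P_d ∩ Γ₀(n,N) → Γ₀(n−1, N/d)^± → 1 induced by ψ_d² is exact. -/

import Mathlib

open Matrix

/-- `g_x` over `ℤ`: the identity matrix with its `(1,2)` entry replaced by `x`. -/
def gmatZ (n : ℕ) (x : ℤ) : Matrix (Fin (n + 2)) (Fin (n + 2)) ℤ :=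
  1 + x • Matrix.single 0 1 1

/-- Conjugation `g_d s g_d⁻¹` (note `g_d⁻¹ = g_{-d}`). -/
def conjd (n : ℕ) (d : ℤ) (s : Matrix (Fin (n + 2)) (Fin (n + 2)) ℤ) :
    Matrix (Fin (n + 2)) (Fin (n + 2)) ℤ :=
  gmatZ n d * s * gmatZ n (-d)

/-- `S₀(m+1,N)^±`: integer matrices with nonzero determinant relatively prime to `pN`
whose first row is `≡ (∗,0,…,0) (mod N)`. -/
def S0pm (p N : ℕ) {m : ℕ} : Set (Matrix (Fin (m + 1)) (Fin (m + 1)) ℤ) :=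
  {s | s.det ≠ 0 ∧ Int.gcd s.det (p * N) = 1 ∧ ∀ j : Fin (m + 1), j ≠ 0 → (N : ℤ) ∣ s 0 j}

/-- `ψ_d¹(s)`: the `(1,1)` entry of `g_d s g_d⁻¹`. -/
def psi1 (n : ℕ) (d : ℤ) (s : Matrix (Fin (n + 2)) (Fin (n + 2)) ℤ) : ℤ :=
  conjd n d s 0 0

/-- `ψ_d²(s)`: the lower-right `(n-1)×(n-1)` block of `g_d s g_d⁻¹`. -/
def psi2 (n : ℕ) (d : ℤ) (s : Matrix (Fin (n + 2)) (Fin (n + 2)) ℤ) :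
    Matrix (Fin (n + 1)) (Fin (n + 1)) ℤ :=
  Matrix.of fun i j => conjd n d s i.succ j.succ

/-- `Γ₀(m+1,N)`: integer matrices of determinant `1` with first row `≡ (∗,0,…,0) (mod N)`. -/
def Gamma0Z (N : ℕ) {m : ℕ} : Set (Matrix (Fin (m + 1)) (Fin (m + 1)) ℤ) :=
  {g | g.det = 1 ∧ ∀ j : Fin (m + 1), j ≠ 0 → (N : ℤ) ∣ g 0 j}

/-- `Γ₀(m+1,N)^±`: integer matrices of determinant `±1` with first row `≡ (∗,0,…,0) (mod N)`. -/
def Gamma0pmZ (N : ℕ) {m : ℕ} : Set (Matrix (Fin (m + 1)) (Fin (m + 1)) ℤ) :=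
  {g | (g.det = 1 ∨ g.det = -1) ∧ ∀ j : Fin (m + 1), j ≠ 0 → (N : ℤ) ∣ g 0 j}

/-- `P_d` (for integer matrices with nonzero determinant): `g_d s g_d⁻¹` has first row
zero away from the `(1,1)` entry. -/
def memPd (n : ℕ) (d : ℤ) (s : Matrix (Fin (n + 2)) (Fin (n + 2)) ℤ) : Prop :=
  s.det ≠ 0 ∧ ∀ j : Fin (n + 2), j ≠ 0 → conjd n d s 0 j = 0

/-- `U_d = g_d⁻¹ U₀ g_d` (integral points): `g_d s g_d⁻¹` agrees with the identity matrix
except in the first column below the `(1,1)` entry. -/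
def memUd (n : ℕ) (d : ℤ) (s : Matrix (Fin (n + 2)) (Fin (n + 2)) ℤ) : Prop :=
  ∀ i j : Fin (n + 2), ¬(j = 0 ∧ i ≠ 0) →
    conjd n d s i j = (1 : Matrix (Fin (n + 2)) (Fin (n + 2)) ℤ) i j

lemma gmat_mul_apply (n : ℕ) (x : ℤ) (s : Matrix (Fin (n+2)) (Fin (n+2)) ℤ) (i j : Fin (n+2)) :
    (gmatZ n x * s) i j = s i j + (if i = 0 then x * s 1 j else 0) := by
  rw [gmatZ, add_mul, one_mul, Matrix.add_apply, Matrix.smul_mul, Matrix.smul_apply]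
  by_cases h : i = 0
  · subst h; simp
  · simp [h]

lemma mul_gmat_apply (n : ℕ) (x : ℤ) (s : Matrix (Fin (n+2)) (Fin (n+2)) ℤ) (i j : Fin (n+2)) :
    (s * gmatZ n x) i j = s i j + (if j = 1 then x * s i 0 else 0) := by
  rw [gmatZ, mul_add, mul_one, Matrix.add_apply, Matrix.mul_smul, Matrix.smul_apply]
  by_cases h : j = 1
  · subst h; simp [mul_comm]
  · simp [h]

lemma gmat_mul_gmat (n : ℕ) (x y : ℤ) : gmatZ n x * gmatZ n y = gmatZ n (x + y) := by
  ext i j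
  rw [gmat_mul_apply, gmatZ, gmatZ]
  by_cases h : i = 0
  · subst h
    simp [Matrix.add_apply, Matrix.smul_apply, Matrix.one_apply, Matrix.single,
      Fin.ext_iff, mul_add]
    by_cases hj : (1 : ℕ) = (j : ℕ) <;> simp [hj] <;> ring
  · have h2 : ¬((0 : Fin (n+2)) = i ∧ (1 : Fin (n+2)) = j) := fun hc => h hc.1.symm
    simp [h, h2, Matrix.add_apply, Matrix.smul_apply, Matrix.single]

lemma gmat_inv (n : ℕ) (d : ℤ) : gmatZ n (-d) * gmatZ n d = 1 := by
  rw [gmat_mul_gmat]; simp [gmatZ]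

lemma conjd_mul (n : ℕ) (d : ℤ) (s t : Matrix (Fin (n+2)) (Fin (n+2)) ℤ) :
    conjd n d (s * t) = conjd n d s * conjd n d t := by
  unfold conjd
  rw [show (gmatZ n d * s * gmatZ n (-d)) * (gmatZ n d * t * gmatZ n (-d))
      = gmatZ n d * s * ((gmatZ n (-d) * gmatZ n d) * (t * gmatZ n (-d))) by
    simp only [Matrix.mul_assoc], gmat_inv, one_mul]
  simp only [Matrix.mul_assoc]

lemma gmat_det (n : ℕ) (x : ℤ) : (gmatZ n x).det = 1 := by
  have hbt : (gmatZ n x).BlockTriangular id := by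
    intro i j hij
    simp only [gmatZ, Matrix.add_apply, Matrix.smul_apply, Matrix.single, Matrix.one_apply]
    have h1 : i ≠ j := (ne_of_lt hij).symm
    have h2 : ¬((0 : Fin (n+2)) = i ∧ (1 : Fin (n+2)) = j) := by
      rintro ⟨rfl, rfl⟩
      simp [Fin.lt_def] at hij
    simp [h1, h2, Matrix.of_apply]
  rw [Matrix.det_of_upperTriangular hbt]
  apply Finset.prod_eq_one
  intro i _
  have h2 : ¬((0 : Fin (n+2)) = i ∧ (1 : Fin (n+2)) = i) := by
    rintro ⟨rfl, h⟩
    have := congrArg Fin.val h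
    simp at this
  simp [gmatZ, Matrix.add_apply, Matrix.smul_apply, Matrix.single, Matrix.one_apply, h2]

lemma conjd_det (n : ℕ) (d : ℤ) (s : Matrix (Fin (n+2)) (Fin (n+2)) ℤ) :
    (conjd n d s).det = s.det := by
  rw [conjd, Matrix.det_mul, Matrix.det_mul, gmat_det, gmat_det, one_mul, mul_one]

lemma conjd_apply (n : ℕ) (d : ℤ) (s : Matrix (Fin (n+2)) (Fin (n+2)) ℤ) (i j : Fin (n+2)) :
    conjd n d s i j = s i j + (if i = 0 then d * s 1 j else 0)
      - (if j = 1 then d * (s i 0 + (if i = 0 then d * s 1 0 else 0)) else 0) := by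
  rw [conjd, mul_gmat_apply, gmat_mul_apply, gmat_mul_apply]
  by_cases h : j = 1 <;> simp [h] <;> ring

lemma conjd_conj_inv (n : ℕ) (d : ℤ) (C : Matrix (Fin (n+2)) (Fin (n+2)) ℤ) :
    conjd n d (gmatZ n (-d) * C * gmatZ n d) = C := by
  unfold conjd
  rw [show gmatZ n d * (gmatZ n (-d) * C * gmatZ n d) * gmatZ n (-d)
      = (gmatZ n d * gmatZ n (-d)) * C * (gmatZ n d * gmatZ n (-d)) by
    simp only [Matrix.mul_assoc]]
  rw [gmat_mul_gmat]
  simp [gmatZ]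

lemma det_firstrow {m : ℕ} (A : Matrix (Fin (m+1)) (Fin (m+1)) ℤ)
    (h : ∀ j : Fin (m+1), j ≠ 0 → A 0 j = 0) :
    A.det = A 0 0 * (A.submatrix Fin.succ Fin.succ).det := by
  rw [Matrix.det_succ_row_zero]
  rw [Finset.sum_eq_single 0]
  · simp [Fin.succAbove_zero]
  · intro j _ hj
    rw [h j hj]; ring
  · simp

lemma succ_ne_one {m : ℕ} (j : Fin (m+1)) (hj : j ≠ 0) : (Fin.succ j : Fin (m+2)) ≠ 1 := by
  intro hc
  apply hj
  have := congrArg Fin.val hc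
  simp [Fin.val_succ] at this
  exact Fin.ext (by simpa using this)

lemma psi2_submatrix (n : ℕ) (d : ℤ) (s : Matrix (Fin (n+2)) (Fin (n+2)) ℤ) :
    (conjd n d s).submatrix Fin.succ Fin.succ = psi2 n d s := rfl

/-- the sequence
`1 → U_d ∩ Γ₀(n,N) → P_d ∩ Γ₀(n,N) → Γ₀(n-1,N/d)^± → 1` induced by `ψ_d²` is exact:
`ψ_d²` restricted to `P_d ∩ Γ₀(n,N)` is a homomorphism onto `Γ₀(n-1,N/d)^±` with kernel
exactly `U_d ∩ Γ₀(n,N)`. -/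
theorem stmt3 (p : ℕ) (hp : p.Prime) (n N d : ℕ) (hN : 0 < N) (hd : 0 < d) (hdvd : d ∣ N)
    (hgcd : Nat.gcd d (N / d) = 1) :
    (∀ s, memPd n (d : ℤ) s → s ∈ Gamma0Z N → ∀ t, memPd n (d : ℤ) t → t ∈ Gamma0Z N →
      psi2 n (d : ℤ) (s * t) = psi2 n (d : ℤ) s * psi2 n (d : ℤ) t) ∧
    (∀ s, memPd n (d : ℤ) s → s ∈ Gamma0Z N → psi2 n (d : ℤ) s ∈ Gamma0pmZ (N / d)) ∧
    (∀ g ∈ Gamma0pmZ (N / d), ∃ s, memPd n (d : ℤ) s ∧ s ∈ Gamma0Z N ∧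
      psi2 n (d : ℤ) s = g) ∧
    (∀ s, memPd n (d : ℤ) s → s ∈ Gamma0Z N →
      (psi2 n (d : ℤ) s = 1 ↔ memUd n (d : ℤ) s ∧ s ∈ Gamma0Z N)) := by
  set M : ℕ := N / d with hM
  have hNdM : (N : ℤ) = (d : ℤ) * (M : ℤ) := by
    rw [← Nat.cast_mul, Nat.mul_div_cancel' hdvd]
  have hdz : (d : ℤ) ≠ 0 := by exact_mod_cast hd.ne'
  refine ⟨?_, ?_, ?_, ?_⟩
  -- (1) multiplicativity
  · intro s hsP hsΓ t htP htΓ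
    ext i j
    show conjd n (d:ℤ) (s*t) i.succ j.succ = _
    rw [conjd_mul, Matrix.mul_apply]
    rw [Fin.sum_univ_succ]
    rw [htP.2 j.succ (Fin.succ_ne_zero j), mul_zero, zero_add]
    rfl
  -- (2) maps into Gamma0pm
  · intro s hsP hsΓ
    constructor
    · -- determinant ±1
      have hdet : conjd n (d:ℤ) s 0 0 * (psi2 n (d:ℤ) s).det = 1 := by
        rw [← psi2_submatrix, ← det_firstrow _ hsP.2, conjd_det, hsΓ.1]
      have : IsUnit (psi2 n (d:ℤ) s).det :=
        IsUnit.of_mul_eq_one _ (by rw [mul_comm]; exact hdet)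
      exact Int.isUnit_iff.mp this
    · intro j hj
      show ((M:ℕ) : ℤ) ∣ conjd n (d:ℤ) s (Fin.succ 0) j.succ
      have hj1 : (Fin.succ j : Fin (n+2)) ≠ 1 := succ_ne_one j hj
      have hj0 : (Fin.succ j : Fin (n+2)) ≠ 0 := Fin.succ_ne_zero j
      have e1 : conjd n (d:ℤ) s (Fin.succ 0) j.succ = s (Fin.succ 0) j.succ := by
        rw [conjd_apply]
        simp [Fin.succ_ne_zero, hj1]
      have e0 : conjd n (d:ℤ) s 0 j.succ = s 0 j.succ + (d:ℤ) * s 1 j.succ := by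
        rw [conjd_apply]
        simp [hj1]
      have hz : s 0 j.succ + (d:ℤ) * s 1 j.succ = 0 := by
        rw [← e0]; exact hsP.2 j.succ hj0
      have hNdvd : (N : ℤ) ∣ s 0 j.succ := hsΓ.2 j.succ hj0
      have : ((d:ℤ) * (M:ℤ)) ∣ (d:ℤ) * s 1 j.succ := by
        rw [← hNdM]
        have : (d:ℤ) * s 1 j.succ = -(s 0 j.succ) := by linarith
        rw [this]
        exact dvd_neg.mpr hNdvd
      have h1 : (Fin.succ 0 : Fin (n+2)) = 1 := rfl
      rw [e1, h1]
      exact (mul_dvd_mul_iff_left hdz).mp this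
  -- (3) surjectivity
  · intro g hg
    obtain ⟨hgdet, hgcong⟩ := hg
    set ε : ℤ := g.det with hε
    obtain ⟨u, v, huv⟩ : IsCoprime (d : ℤ) (M : ℤ) := by
      rw [Int.isCoprime_iff_gcd_eq_one, Int.gcd_natCast_natCast]
      exact hgcd
    set c0 : ℤ := u * (ε - g 0 0) with hc0
    set C : Matrix (Fin (n+2)) (Fin (n+2)) ℤ :=
      Matrix.of fun i j =>
        Fin.cases (Fin.cases ε (fun _ => 0) j)
          (fun i' => Fin.cases (if i' = 0 then c0 else 0) (fun j' => g i' j') j) i with hC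
    have hC00 : C 0 0 = ε := rfl
    have hC0s : ∀ j' : Fin (n+1), C 0 j'.succ = 0 := fun j' => by simp [hC]
    have hCs0 : ∀ i' : Fin (n+1), C i'.succ 0 = if i' = 0 then c0 else 0 := fun i' => by simp [hC]
    have hCss : ∀ i' j' : Fin (n+1), C i'.succ j'.succ = g i' j' := fun i' j' => by simp [hC]
    have hC0 : ∀ j : Fin (n+2), j ≠ 0 → C 0 j = 0 := by
      intro j hj
      obtain ⟨j', rfl⟩ := Fin.eq_succ_of_ne_zero hj
      exact hC0s j'
    have hsub : C.submatrix Fin.succ Fin.succ = g := by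
      ext i j; exact hCss i j
    have hdetC : C.det = 1 := by
      rw [det_firstrow C hC0, hsub, hC00, ← hε]
      rcases hgdet with h | h <;> rw [h] <;> ring
    set s : Matrix (Fin (n+2)) (Fin (n+2)) ℤ := gmatZ n (-(d:ℤ)) * C * gmatZ n (d:ℤ) with hs
    have hconj : conjd n (d:ℤ) s = C := conjd_conj_inv n (d:ℤ) C
    have hdets : s.det = 1 := by rw [← conjd_det n (d:ℤ) s, hconj, hdetC]
    have hC10 : C 1 0 = c0 := by rw [← Fin.succ_zero_eq_one, hCs0]; simp
    have hC1s : ∀ j' : Fin (n+1), C 1 j'.succ = g 0 j' := fun j' => by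
      rw [← Fin.succ_zero_eq_one, hCss]
    have hs0 : ∀ j : Fin (n+2), s 0 j = (C 0 j + (-(d:ℤ)) * C 1 j)
        + (if j = 1 then (d:ℤ) * (C 0 0 + (-(d:ℤ)) * C 1 0) else 0) := by
      intro j
      rw [hs, mul_gmat_apply, gmat_mul_apply, gmat_mul_apply]
      simp
    refine ⟨s, ⟨by simp [hdets], fun j hj => by rw [hconj]; exact hC0 j hj⟩, ⟨hdets, ?_⟩, ?_⟩
    · intro j hj
      obtain ⟨j', rfl⟩ := Fin.eq_succ_of_ne_zero hj
      by_cases hj' : j' = 0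
      · subst hj'
        have e : s 0 (Fin.succ 0) = (d:ℤ) * (ε - g 0 0 - (d:ℤ) * c0) := by
          rw [hs0, if_pos Fin.succ_zero_eq_one, hC0s 0, hC1s 0, hC00, hC10]
          ring
        have hMd : (M:ℤ) ∣ (ε - g 0 0 - (d:ℤ) * c0) := by
          refine ⟨(ε - g 0 0) * v, ?_⟩
          rw [hc0]
          linear_combination (g 0 0 - ε) * huv
        rw [e, hNdM]
        exact mul_dvd_mul_left _ hMd
      · have hne1 : (Fin.succ j' : Fin (n+2)) ≠ 1 := succ_ne_one j' hj'
        have e : s 0 j'.succ = -((d:ℤ) * g 0 j') := by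
          rw [hs0, if_neg hne1, hC0s, hC1s]
          ring
        rw [e, hNdM]
        exact dvd_neg.mpr (mul_dvd_mul_left _ (hgcong j' hj'))
    · ext i j
      show conjd n (d:ℤ) s i.succ j.succ = g i j
      rw [hconj]
      exact hCss i j
  -- (4) kernel
  · intro s hsP hsΓ
    constructor
    · intro h1
      have hdet : conjd n (d:ℤ) s 0 0 * (psi2 n (d:ℤ) s).det = 1 := by
        rw [← psi2_submatrix, ← det_firstrow _ hsP.2, conjd_det, hsΓ.1]
      have h00 : conjd n (d:ℤ) s 0 0 = 1 := by
        rw [h1] at hdet; simpa using hdet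
      refine ⟨?_, hsΓ⟩
      intro i j hij
      push_neg at hij
      by_cases hj : j = 0
      · subst hj
        have hi : i = 0 := hij rfl
        subst hi
        rw [h00, Matrix.one_apply_eq]
      · obtain ⟨j', rfl⟩ := Fin.eq_succ_of_ne_zero hj
        by_cases hi : i = 0
        · subst hi
          rw [hsP.2 _ hj, Matrix.one_apply_ne (Fin.succ_ne_zero j').symm]
        · obtain ⟨i', rfl⟩ := Fin.eq_succ_of_ne_zero hi
          have : conjd n (d:ℤ) s i'.succ j'.succ = psi2 n (d:ℤ) s i' j' := rfl
          rw [this, h1]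
          simp [Matrix.one_apply, Fin.succ_inj]
    · rintro ⟨hU, -⟩
      ext i j
      have : psi2 n (d:ℤ) s i j = conjd n (d:ℤ) s i.succ j.succ := rfl
      rw [this, hU i.succ j.succ (by simp [Fin.succ_ne_zero])]
      simp [Matrix.one_apply, Fin.succ_inj]
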